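/- If a secret sharing scheme on n unit-size shares satisfies perfect secrecy against z parties (H(S | W_Z) = H(S) for all |Z| = z) and the MDS property (H(S | W_A) = 0 for all |A| = t), then H(S) ≤ t − z units. -/

import Mathlib

/-- Shannon entropy (natural log) of a random variable `X` on a finite
probability space with weights `μ`. -/
noncomputable def shannonEntropy {Ω γ : Type*} [Fintype Ω] [Fintype γ] [DecidableEq γ]
    (μ : Ω → ℝ) (X : Ω → γ) : ℝ :=
  ∑ c : γ, Real.negMulLog (∑ ω ∈ Finset.univ.filter (fun ω => X ω = c), μ ω)

lemma negMulLog_add_le' {a b : ℝ} (ha : 0 ≤ a) (hb : 0 ≤ b) :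
    Real.negMulLog (a + b) ≤ Real.negMulLog a + Real.negMulLog b := by
  rcases eq_or_lt_of_le ha with h | h
  · simp [← h]
  rcases eq_or_lt_of_le hb with h' | h'
  · simp [← h']
  have h1 : a * Real.log a ≤ a * Real.log (a + b) :=
    mul_le_mul_of_nonneg_left (Real.log_le_log h (by linarith)) ha
  have h2 : b * Real.log b ≤ b * Real.log (a + b) :=
    mul_le_mul_of_nonneg_left (Real.log_le_log h' (by linarith)) hb
  have h3 : (a + b) * Real.log (a + b)
      = a * Real.log (a + b) + b * Real.log (a + b) := by ring
  simp only [Real.negMulLog, neg_mul]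
  linarith

lemma negMulLog_sum_le' {ι : Type*} (s : Finset ι) (f : ι → ℝ) (hf : ∀ i ∈ s, 0 ≤ f i) :
    Real.negMulLog (∑ i ∈ s, f i) ≤ ∑ i ∈ s, Real.negMulLog (f i) := by
  induction s using Finset.cons_induction with
  | empty => simp
  | cons a s ha ih =>
    rw [Finset.sum_cons, Finset.sum_cons]
    refine (negMulLog_add_le' (hf a (Finset.mem_cons_self _ _))
      (Finset.sum_nonneg fun i hi => hf i (Finset.mem_cons_of_mem hi))).trans ?_
    exact add_le_add le_rfl (ih fun i hi => hf i (Finset.mem_cons_of_mem hi))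

lemma sum_negMulLog_le' {ι : Type*} (s : Finset ι) (f : ι → ℝ) (hf : ∀ i ∈ s, 0 ≤ f i) :
    ∑ i ∈ s, Real.negMulLog (f i) ≤
      Real.negMulLog (∑ i ∈ s, f i) + (∑ i ∈ s, f i) * Real.log s.card := by
  rcases s.eq_empty_or_nonempty with rfl | hs
  · simp
  have hN : (0 : ℝ) < s.card := by exact_mod_cast Finset.card_pos.2 hs
  set T := ∑ i ∈ s, f i with hT
  rcases eq_or_lt_of_le (Finset.sum_nonneg hf) with h0 | h0
  · have : ∀ i ∈ s, f i = 0 := by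
      intro i hi
      exact (Finset.sum_eq_zero_iff_of_nonneg hf).1 h0.symm i hi
    have hT0 : T = 0 := hT.trans h0.symm
    rw [hT0]
    calc ∑ i ∈ s, Real.negMulLog (f i) = ∑ i ∈ s, (0:ℝ) := by
          refine Finset.sum_congr rfl fun i hi => ?_
          rw [this i hi, Real.negMulLog_zero]
      _ ≤ _ := by simp
  · have jensen := Real.concaveOn_negMulLog.le_map_sum
      (w := fun _ : ι => ((s.card : ℝ))⁻¹) (p := f) (t := s)
      (fun i _ => by positivity)
      (by simp [Finset.sum_const]; field_simp)
      (fun i hi => Set.mem_Ici.2 (hf i hi))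
    simp only [smul_eq_mul, ← Finset.mul_sum] at jensen
    have hlog : Real.log ((s.card : ℝ)⁻¹ * T) = Real.log T - Real.log s.card := by
      rw [Real.log_mul (by positivity) (ne_of_gt (hT ▸ h0)), Real.log_inv]
      ring
    have hexp : Real.negMulLog ((s.card : ℝ)⁻¹ * T)
        = (s.card : ℝ)⁻¹ * (Real.negMulLog T + T * Real.log s.card) := by
      simp only [Real.negMulLog, hlog]
      field_simp
      ring
    rw [hexp] at jensen
    have := mul_le_mul_of_nonneg_left jensen (le_of_lt hN)
    rw [← mul_assoc, ← mul_assoc, mul_inv_cancel₀ (ne_of_gt hN), one_mul, one_mul] at this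
    linarith

lemma entropy_comp_le' {Ω γ δ : Type*} [Fintype Ω] [Fintype γ] [Fintype δ]
    [DecidableEq γ] [DecidableEq δ]
    (μ : Ω → ℝ) (hμ : ∀ ω, 0 ≤ μ ω) (X : Ω → γ) (g : γ → δ) :
    shannonEntropy μ (fun ω => g (X ω)) ≤ shannonEntropy μ X := by
  unfold shannonEntropy
  have key : ∀ b : δ, ∑ ω ∈ Finset.univ.filter (fun ω => g (X ω) = b), μ ω
      = ∑ c ∈ Finset.univ.filter (fun c => g c = b),
          ∑ ω ∈ Finset.univ.filter (fun ω => X ω = c), μ ω := by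
    intro b
    rw [← Finset.sum_fiberwise (Finset.univ.filter (fun ω => g (X ω) = b)) X μ]
    rw [Finset.sum_filter]
    refine Finset.sum_congr rfl fun c _ => ?_
    by_cases hc : g c = b
    · rw [if_pos hc, Finset.filter_filter]
      refine Finset.sum_congr ?_ fun _ _ => rfl
      refine Finset.filter_congr fun ω _ => ?_
      constructor
      · rintro ⟨_, h⟩; exact h
      · intro h; exact ⟨by rw [h, hc], h⟩
    · rw [if_neg hc]
      refine Finset.sum_eq_zero fun ω hω => ?_
      simp only [Finset.mem_filter] at hω
      exact absurd (hω.2 ▸ hω.1.2) hc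
  calc ∑ b : δ, Real.negMulLog (∑ ω ∈ Finset.univ.filter (fun ω => g (X ω) = b), μ ω)
      ≤ ∑ b : δ, ∑ c ∈ Finset.univ.filter (fun c => g c = b),
          Real.negMulLog (∑ ω ∈ Finset.univ.filter (fun ω => X ω = c), μ ω) := by
        refine Finset.sum_le_sum fun b _ => ?_
        rw [key b]
        exact negMulLog_sum_le' _ _ fun c _ => Finset.sum_nonneg fun ω _ => hμ ω
    _ = _ := by rw [Finset.sum_fiberwise]

lemma entropy_pair_le' {Ω γ δ : Type*} [Fintype Ω] [Fintype γ] [Fintype δ]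
    [DecidableEq γ] [DecidableEq δ]
    (μ : Ω → ℝ) (hμ : ∀ ω, 0 ≤ μ ω) (hμ1 : ∑ ω, μ ω = 1) (X : Ω → γ) (Y : Ω → δ) :
    shannonEntropy μ (fun ω => (X ω, Y ω)) ≤
      shannonEntropy μ X + Real.log (Fintype.card δ) := by
  unfold shannonEntropy
  rw [Fintype.sum_prod_type]
  have key : ∀ x : γ, ∑ y : δ,
      (∑ ω ∈ Finset.univ.filter (fun ω => (X ω, Y ω) = (x, y)), μ ω)
      = ∑ ω ∈ Finset.univ.filter (fun ω => X ω = x), μ ω := by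
    intro x
    rw [← Finset.sum_fiberwise (Finset.univ.filter (fun ω => X ω = x)) Y μ]
    refine Finset.sum_congr rfl fun y _ => ?_
    rw [Finset.filter_filter]
    refine Finset.sum_congr ?_ fun _ _ => rfl
    refine Finset.filter_congr fun ω _ => ?_
    simp [Prod.ext_iff, and_comm]
  have htot : ∑ x : γ, ∑ ω ∈ Finset.univ.filter (fun ω => X ω = x), μ ω = 1 := by
    rw [Finset.sum_fiberwise Finset.univ X μ]; exact hμ1
  calc ∑ x : γ, ∑ y : δ,
        Real.negMulLog (∑ ω ∈ Finset.univ.filter (fun ω => (X ω, Y ω) = (x, y)), μ ω)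
      ≤ ∑ x : γ, (Real.negMulLog (∑ ω ∈ Finset.univ.filter (fun ω => X ω = x), μ ω)
          + (∑ ω ∈ Finset.univ.filter (fun ω => X ω = x), μ ω)
            * Real.log (Fintype.card δ)) := by
        refine Finset.sum_le_sum fun x _ => ?_
        have := sum_negMulLog_le' (Finset.univ : Finset δ)
          (fun y => ∑ ω ∈ Finset.univ.filter (fun ω => (X ω, Y ω) = (x, y)), μ ω)
          (fun y _ => Finset.sum_nonneg fun ω _ => hμ ω)
        rw [key x] at this
        simpa [Finset.card_univ] using this
    _ = _ := by
        rw [Finset.sum_add_distrib, ← Finset.sum_mul, htot, one_mul]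

/-- If a secret sharing scheme on n shares (each over alphabet A, i.e. of size
at most one unit = log |A|) satisfies perfect secrecy against z parties and the
MDS property for threshold t, then H(S) ≤ (t − z) units. -/
theorem stmt19 {Ω A B : Type*} [Fintype Ω] [Fintype A] [Fintype B]
    [DecidableEq A] [DecidableEq B]
    (n t z : ℕ) (hz : z < t) (ht : t ≤ n)
    (μ : Ω → ℝ) (hμ : ∀ ω, 0 ≤ μ ω) (hμ1 : ∑ ω, μ ω = 1)
    (S : Ω → B) (W : Fin n → Ω → A)
    (hsec : ∀ Z : Finset (Fin n), Z.card = z →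
      shannonEntropy μ (fun ω => (S ω, fun i : Z => W i.1 ω)) -
        shannonEntropy μ (fun ω => fun i : Z => W i.1 ω) = shannonEntropy μ S)
    (hmds : ∀ T : Finset (Fin n), T.card = t →
      shannonEntropy μ (fun ω => (S ω, fun i : T => W i.1 ω)) -
        shannonEntropy μ (fun ω => fun i : T => W i.1 ω) = 0) :
    shannonEntropy μ S ≤ ((t - z : ℕ) : ℝ) * Real.log (Fintype.card A) := by
  obtain ⟨T, hTsub, hTcard⟩ := Finset.exists_subset_card_eq
    (show t ≤ (Finset.univ : Finset (Fin n)).card by simpa using ht)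
  obtain ⟨Z, hZT, hZcard⟩ := Finset.exists_subset_card_eq
    (show z ≤ T.card by rw [hTcard]; exact le_of_lt hz)
  set R := T \ Z with hR
  have hRcard : R.card = t - z := by
    rw [hR, Finset.card_sdiff_of_subset hZT, hTcard, hZcard]
  have h1 := hsec Z hZcard
  have h2 := hmds T hTcard
  -- (S, W_Z) is a function of (S, W_T)
  have h3 : shannonEntropy μ (fun ω => (S ω, fun i : Z => W i.1 ω)) ≤
      shannonEntropy μ (fun ω => (S ω, fun i : T => W i.1 ω)) := by
    have := entropy_comp_le' μ hμ (fun ω => (S ω, fun i : T => W i.1 ω))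
      (fun p => (p.1, fun i : Z => p.2 ⟨i.1, hZT i.2⟩))
    exact this
  -- W_T is a function of (W_Z, W_R)
  have h4 : shannonEntropy μ (fun ω => fun i : T => W i.1 ω) ≤
      shannonEntropy μ (fun ω => ((fun i : Z => W i.1 ω), (fun i : R => W i.1 ω))) := by
    have := entropy_comp_le' μ hμ
      (fun ω => ((fun i : Z => W i.1 ω), (fun i : R => W i.1 ω)))
      (fun p => fun i : T => if h : i.1 ∈ Z then p.1 ⟨i.1, h⟩
        else p.2 ⟨i.1, Finset.mem_sdiff.2 ⟨i.2, h⟩⟩)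
    refine le_trans (le_of_eq ?_) this
    congr 1
    funext ω
    funext i
    by_cases h : i.1 ∈ Z <;> simp [h]
  have h5 : shannonEntropy μ (fun ω => ((fun i : Z => W i.1 ω), (fun i : R => W i.1 ω))) ≤
      shannonEntropy μ (fun ω => fun i : Z => W i.1 ω)
        + Real.log (Fintype.card ({ i // i ∈ R } → A)) := by
    exact entropy_pair_le' μ hμ hμ1 (fun ω => fun i : Z => W i.1 ω)
      (fun ω => fun i : R => W i.1 ω)
  have hcard : Real.log (Fintype.card ({ i // i ∈ R } → A))
      = ((t - z : ℕ) : ℝ) * Real.log (Fintype.card A) := by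
    have : Fintype.card ({ i // i ∈ R } → A) = Fintype.card A ^ (t - z) := by
      simp [Fintype.card_fun, Fintype.card_coe, hRcard]
    rw [this]
    push_cast [Real.log_pow]
    ring
  rw [hcard] at h5
  linarith
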